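/- Let Ψ be a p×p real positive definite diagonal matrix, V a p×p real orthogonal matrix with first q columns V₁ (q < p), θ : Fin p → ℝ, and Δ the q×q diagonal matrix with entries √(max(θ_j − 1, 0)). Then with Λ̂ = Ψ^{1/2} V₁ Δ, one has det(Λ̂Λ̂ᵀ + Ψ) = det(Ψ) · Π_{j=1}^{q} max(θ_j, 1). -/

import Mathlib

open Matrix

/-- Determinant of the optimized factor-analytic covariance:
`det(Λ̂Λ̂ᵀ + Ψ) = det Ψ · ∏_{j≤q} max(θ_j, 1)` where `Λ̂ = Ψ^{1/2} V₁ Δ`. -/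
theorem optimized_covariance_det {p q : ℕ} (hq : q < p)
    (Ψ Ψh : Matrix (Fin p) (Fin p) ℝ)
    (hΨ : Ψ.PosDef) (hΨdiag : Ψ.IsDiag)
    (hΨh : Ψh.PosDef) (hΨhsq : Ψh * Ψh = Ψ)
    (V : Matrix (Fin p) (Fin p) ℝ) (hV : V ∈ Matrix.orthogonalGroup (Fin p) ℝ)
    (θ : Fin p → ℝ)
    (V₁ : Matrix (Fin p) (Fin q) ℝ)
    (hV₁ : V₁ = Matrix.of fun i j => V i (Fin.castLE hq.le j))
    (Δ : Matrix (Fin q) (Fin q) ℝ)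
    (hΔ : Δ = Matrix.diagonal fun j => Real.sqrt (max (θ (Fin.castLE hq.le j) - 1) 0))
    (Λhat : Matrix (Fin p) (Fin q) ℝ) (hΛhat : Λhat = Ψh * V₁ * Δ) :
    (Λhat * Λhatᵀ + Ψ).det = Ψ.det * ∏ j : Fin q, max (θ (Fin.castLE hq.le j)) 1 := by
  have hΨhT : Ψhᵀ = Ψh := by
    have := hΨh.isHermitian
    simpa [Matrix.IsHermitian, Matrix.conjTranspose_eq_transpose_of_trivial] using this
  have hΔT : Δᵀ = Δ := by rw [hΔ, Matrix.diagonal_transpose]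
  have hΔΔ : Δ * Δ = Matrix.diagonal fun j => max (θ (Fin.castLE hq.le j) - 1) 0 := by
    rw [hΔ, Matrix.diagonal_mul_diagonal]
    ext j k
    by_cases h : j = k
    · subst h; simp [Real.mul_self_sqrt (le_max_right _ _)]
    · simp [Matrix.diagonal_apply_ne _ h]
  have hV₁TV₁ : V₁ᵀ * V₁ = 1 := by
    have hVo : Vᵀ * V = 1 := by
      have := (Matrix.mem_orthogonalGroup_iff' (Fin p) ℝ).mp hV
      simpa [Matrix.star_eq_conjTranspose] using this
    ext j k
    have := congrFun (congrFun hVo (Fin.castLE hq.le j)) (Fin.castLE hq.le k)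
    simp only [Matrix.mul_apply, Matrix.transpose_apply, hV₁, Matrix.of_apply] at this ⊢
    rw [this]
    simp [Matrix.one_apply, Fin.castLE_inj]
  -- rewrite the sum
  have key : Λhat * Λhatᵀ + Ψ = Ψh * (V₁ * (Δ * Δ) * V₁ᵀ + 1) * Ψh := by
    rw [hΛhat, ← hΨhsq]
    simp only [Matrix.transpose_mul, hΨhT, hΔT, Matrix.add_mul, Matrix.mul_add,
      Matrix.one_mul, Matrix.mul_one, Matrix.mul_assoc]
  rw [key]
  rw [Matrix.det_mul, Matrix.det_mul]
  have hdet1 : (V₁ * (Δ * Δ) * V₁ᵀ + 1).det = ∏ j : Fin q, max (θ (Fin.castLE hq.le j)) 1 := by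
    rw [add_comm, ← Matrix.mul_assoc]
    rw [Matrix.det_one_add_mul_comm]
    rw [Matrix.mul_assoc, hΔΔ, ← Matrix.mul_assoc, hV₁TV₁, Matrix.one_mul]
    rw [← Matrix.diagonal_one, Matrix.diagonal_add, Matrix.det_diagonal]
    apply Finset.prod_congr rfl
    intro j _
    rcases le_total (θ (Fin.castLE hq.le j)) 1 with h | h
    · rw [max_eq_right (by linarith), max_eq_right h]; ring
    · rw [max_eq_left (by linarith), max_eq_left h]; ring
  rw [hdet1, ← hΨhsq, Matrix.det_mul]
  ring
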